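/- For every n ≥ 2 there exists at least one W-path of order n. -/

import Mathlib

/-- The unit vector in direction `d·π/3`, viewing the plane as `ℂ`. -/
noncomputable def dirU (d : Fin 6) : ℂ :=
  Complex.exp ((d : ℕ) * Real.pi / 3 * Complex.I)

/-- The position sequence of a direction word: `p₀ = 0`, `p_{m+1} = p_m + dirU (ds_m)`. -/
noncomputable def posSeq (ds : List (Fin 6)) (m : ℕ) : ℂ :=
  ((ds.take m).map dirU).sum

/-- The grid point `P(i,j) = i·u(0) + j·u(1)`. -/
noncomputable def Pt (i j : ℕ) : ℂ := (i : ℂ) * dirU 0 + (j : ℂ) * dirU 1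

/-- The triangular number `T_n = n(n+1)/2`. -/
def triNum (n : ℕ) : ℕ := n * (n + 1) / 2

/-- The inscribed grid `G_n = {P(i,j) : i + j ≤ n - 1}`. -/
def inscribedGrid (n : ℕ) : Set ℂ := {p | ∃ i j : ℕ, i + j ≤ n - 1 ∧ p = Pt i j}

/-- An H-path of order `n`: a direction word of length `T_n - 1` whose position sequence
is injective with image `G_n`, starting at `P(0,0) = 0` and ending at `P(n-1,0)`. -/
def IsHPath (n : ℕ) (w : List (Fin 6)) : Prop :=
  w.length = triNum n - 1 ∧
  (Function.Injective fun m : Fin (w.length + 1) => posSeq w m) ∧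
  (Set.range fun m : Fin (w.length + 1) => posSeq w m) = inscribedGrid n ∧
  posSeq w 0 = Pt 0 0 ∧
  posSeq w w.length = Pt (n - 1) 0

/-- `(a, b)` is a forbidden turn if `b ≡ a + 4 (mod 6)` with `a` even, or
`b ≡ a + 2 (mod 6)` with `a` odd (addition in `Fin 6` is mod 6). -/
def ForbiddenTurn (a b : Fin 6) : Prop :=
  (Even (a : ℕ) ∧ b = a + 4) ∨ (Odd (a : ℕ) ∧ b = a + 2)

/-- A W-path of order `n`: an H-path whose supplemented word `0·w·0` contains no
forbidden turn among its consecutive pairs. -/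
def IsWPath (n : ℕ) (w : List (Fin 6)) : Prop :=
  IsHPath n w ∧ List.Chain' (fun a b => ¬ ForbiddenTurn a b) ((0 : Fin 6) :: (w ++ [0]))

open Real Complex

lemma triNum_succ (m : ℕ) : triNum (m+1) = triNum m + (m+1) := by
  unfold triNum
  have h2 : (m+1) * (m+1+1) = m*(m+1) + 2*(m+1) := by ring
  have h : 2 ∣ m * (m+1) := (Nat.even_mul_succ_self m).two_dvd
  omega

lemma triNum_le {a b : ℕ} (h : a ≤ b) : triNum a ≤ triNum b :=
  Nat.div_le_div_right (Nat.mul_le_mul h (by omega))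

lemma posSeq_zero (w : List (Fin 6)) : posSeq w 0 = 0 := by simp [posSeq]

lemma posSeq_append (w1 w2 : List (Fin 6)) (m : ℕ) :
    posSeq (w1 ++ w2) m = posSeq w1 m + posSeq w2 (m - w1.length) := by
  simp [posSeq, List.take_append]

lemma posSeq_replicate (d : Fin 6) (m r : ℕ) :
    posSeq (List.replicate m d) r = (min r m : ℕ) * dirU d := by
  simp [posSeq, List.take_replicate, List.map_replicate, List.sum_replicate, nsmul_eq_mul]

lemma posSeq_singleton (d : Fin 6) (r : ℕ) :
    posSeq [d] r = if r = 0 then 0 else dirU d := by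
  cases r with
  | zero => simp [posSeq]
  | succ r => simp [posSeq, List.take_of_length_le (by simp : ([d] : List (Fin 6)).length ≤ r+1)]

lemma posSeq_of_le (w : List (Fin 6)) {m : ℕ} (h : w.length ≤ m) :
    posSeq w m = posSeq w w.length := by
  simp [posSeq, List.take_of_length_le h, List.take_of_length_le (le_refl w.length)]


lemma dirU_zero : dirU 0 = 1 := by simp [dirU]

lemma dirU_cast (d : Fin 6) : dirU d = Complex.exp ((((d:ℕ) * Real.pi / 3 : ℝ) : ℂ) * Complex.I) := by
  unfold dirU; push_cast; ring_nf

lemma dirU_re (d : Fin 6) : (dirU d).re = Real.cos ((d:ℕ) * Real.pi / 3) := by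
  rw [dirU_cast, Complex.exp_ofReal_mul_I_re]

lemma dirU_im (d : Fin 6) : (dirU d).im = Real.sin ((d:ℕ) * Real.pi / 3) := by
  rw [dirU_cast, Complex.exp_ofReal_mul_I_im]

lemma u1_re : (dirU 1).re = 1/2 := by
  rw [dirU_re, (by rfl : ((1:Fin 6):ℕ) = 1)]
  norm_num [Real.cos_pi_div_three]

lemma u1_im : (dirU 1).im = Real.sqrt 3 / 2 := by
  rw [dirU_im, (by rfl : ((1:Fin 6):ℕ) = 1)]
  norm_num [Real.sin_pi_div_three]

lemma dirU_four : dirU 4 = - dirU 1 := by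
  have h : (((4:Fin 6):ℕ):ℂ) * Real.pi / 3 * Complex.I
      = Real.pi * Complex.I + (((1:Fin 6):ℕ):ℂ) * Real.pi / 3 * Complex.I := by
    rw [(by rfl : ((4:Fin 6):ℕ) = 4), (by rfl : ((1:Fin 6):ℕ) = 1)]
    push_cast; ring
  unfold dirU
  rw [h, Complex.exp_add, Complex.exp_pi_mul_I]; ring

lemma cos53 : Real.cos (5 * Real.pi / 3) = 1/2 := by
  have h : (5 * Real.pi / 3 : ℝ) = 2*Real.pi - Real.pi/3 := by ring
  rw [h, Real.cos_sub]
  simp [Real.cos_two_pi, Real.sin_two_pi, Real.cos_pi_div_three]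

lemma sin53 : Real.sin (5 * Real.pi / 3) = -(Real.sqrt 3 / 2) := by
  have h : (5 * Real.pi / 3 : ℝ) = 2*Real.pi - Real.pi/3 := by ring
  rw [h, Real.sin_sub]
  simp [Real.cos_two_pi, Real.sin_two_pi, Real.sin_pi_div_three]

lemma dirU_five : dirU 5 = 1 - dirU 1 := by
  apply Complex.ext
  · rw [dirU_re, (by rfl : ((5:Fin 6):ℕ) = 5)]
    push_cast
    rw [cos53]
    simp [u1_re]
    norm_num
  · rw [dirU_im, (by rfl : ((5:Fin 6):ℕ) = 5)]
    push_cast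
    rw [sin53]
    simp [u1_im]



lemma Pt_inj {i j i' j' : ℕ} (h : Pt i j = Pt i' j') : i = i' ∧ j = j' := by
  have h1 := congrArg Complex.im h
  have h2 := congrArg Complex.re h
  simp only [Pt, dirU_zero, Complex.add_im, Complex.add_re, Complex.mul_im, Complex.mul_re,
    Complex.natCast_re, Complex.natCast_im, Complex.one_re, Complex.one_im, u1_re, u1_im,
    mul_zero, zero_mul, mul_one, add_zero, zero_add, sub_zero] at h1 h2
  have hj : (j:ℝ) = j' := mul_right_cancel₀ (by positivity : (Real.sqrt 3/2:ℝ) ≠ 0) h1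
  have hj' : j = j' := by exact_mod_cast hj
  subst hj'
  have hi : (i:ℝ) = i' := by linarith
  exact ⟨by exact_mod_cast hi, rfl⟩

theorem List.chain'_cons' {α : Type*} {R : α → α → Prop} {x : α} {l : List α} :
    List.Chain' R (x :: l) ↔ (∀ y ∈ l.head?, R x y) ∧ List.Chain' R l := List.isChain_cons

theorem List.chain'_append {α : Type*} {R : α → α → Prop} {l₁ l₂ : List α} :
    List.Chain' R (l₁ ++ l₂) ↔ List.Chain' R l₁ ∧ List.Chain' R l₂ ∧
      ∀ x ∈ l₁.getLast?, ∀ y ∈ l₂.head?, R x y := List.isChain_append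

theorem List.chain'_singleton {α : Type*} {R : α → α → Prop} (a : α) : List.Chain' R [a] :=
  List.isChain_singleton a

lemma chain'_rep {d t : Fin 6} (hdd : R d d) (hdt : R d t) (m : ℕ) :
    List.Chain' R (List.replicate m d ++ [t]) := by
  induction m with
  | zero => simp [List.chain'_singleton]
  | succ m ih =>
    rw [List.replicate_succ, List.cons_append, List.chain'_cons']
    refine ⟨?_, ih⟩
    intro b hb
    cases m with
    | zero => simp at hb; subst hb; exact hdt
    | succ m =>
      rw [List.replicate_succ, List.cons_append, List.head?_cons] at hb
      simp at hb; subst hb; exact hdd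


def sj (N k : ℕ) : ℕ := if Even k then 0 else N - k
def colC (N k : ℕ) : List (Fin 6) :=
  List.replicate (N - k) (if Even k then 1 else 4) ++ [if Even k then 5 else 0]

lemma col_pos (N k : ℕ) (hk : k < N) (r : ℕ) (h1 : 1 ≤ r) (h2 : r ≤ N - k + 1) :
    Pt k (sj N k) + posSeq (colC N k) r =
      if r = N - k + 1 then Pt (k+1) (sj N (k+1))
      else Pt k (if Even k then r else N - k - r) := by
  have e1 : ((N - k : ℕ) : ℂ) = (N:ℂ) - k := Nat.cast_sub hk.le
  have e2 : ((N - (k+1) : ℕ) : ℂ) = (N:ℂ) - (k+1) := by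
    rw [Nat.cast_sub hk]; push_cast; ring
  unfold colC
  rw [posSeq_append, posSeq_replicate, posSeq_singleton]
  simp only [List.length_replicate]
  by_cases he : Even k
  · have hs1 : sj N k = 0 := by simp [sj, he]
    have hs2 : sj N (k+1) = N - (k+1) := by simp [sj, Nat.even_add_one, he]
    by_cases hr : r = N - k + 1
    · have hmin : r ⊓ (N - k) = N - k := by omega
      have hsub : ¬ (r - (N - k) = 0) := by omega
      rw [if_pos hr, hmin, if_neg hsub, hs1, hs2, if_pos he, if_pos he, dirU_five]
      simp only [Pt, dirU_zero, e1, e2]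
      push_cast
      ring
    · have hmin : r ⊓ (N - k) = r := by omega
      have hsub : r - (N - k) = 0 := by omega
      rw [if_neg hr, hmin, hsub, if_pos rfl, hs1, if_pos he, if_pos he]
      simp only [Pt, dirU_zero]
      push_cast
      ring
  · have hs1 : sj N k = N - k := by simp [sj, he]
    have hs2 : sj N (k+1) = 0 := by simp [sj, Nat.even_add_one, he]
    by_cases hr : r = N - k + 1
    · have hmin : r ⊓ (N - k) = N - k := by omega
      have hsub : ¬ (r - (N - k) = 0) := by omega
      rw [if_pos hr, hmin, if_neg hsub, hs1, hs2, if_neg he, if_neg he, dirU_four]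
      simp only [Pt, dirU_zero, e1]
      push_cast
      ring
    · have hmin : r ⊓ (N - k) = r := by omega
      have hsub : r - (N - k) = 0 := by omega
      have e3 : ((N - k - r : ℕ) : ℂ) = (N:ℂ) - k - r := by
        rw [Nat.sub_sub, Nat.cast_sub (by omega)]; push_cast; ring
      rw [if_neg hr, hmin, hsub, if_pos rfl, hs1, if_neg he, if_neg he, dirU_four]
      simp only [Pt, dirU_zero, e1, e3]
      push_cast
      ring


def Spec (N k : ℕ) (W : List (Fin 6)) (c : ℕ → ℕ × ℕ) : Prop :=
  W.length = triNum (N + 1) - triNum (N + 1 - k) ∧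
  (∀ m ≤ W.length, posSeq W m = Pt (c m).1 (c m).2) ∧
  (∀ m ≤ W.length, (c m).1 + (c m).2 ≤ N ∧ ((c m).1 < k ∨ c m = (k, sj N k))) ∧
  (∀ m1 ≤ W.length, ∀ m2 ≤ W.length, c m1 = c m2 → m1 = m2) ∧
  (∀ i j : ℕ, i + j ≤ N → (i < k ∨ (i, j) = (k, sj N k)) → ∃ m ≤ W.length, c m = (i, j)) ∧
  c W.length = (k, sj N k) ∧
  List.Chain' (fun a b => ¬ ForbiddenTurn a b) (0 :: W) ∧
  (0 :: W).getLast? = some (if Even k then 0 else 5)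

def stepc (N k L : ℕ) (c : ℕ → ℕ × ℕ) : ℕ → ℕ × ℕ := fun m =>
  if m ≤ L then c m
  else if m = L + (N - k + 1) then (k+1, sj N (k+1))
  else (k, if Even k then m - L else N - k - (m - L))

lemma stepc_old {N k L : ℕ} {c} {m : ℕ} (h : m ≤ L) : stepc N k L c m = c m := by
  simp [stepc, h]

lemma stepc_last {N k L : ℕ} {c} : stepc N k L c (L + (N - k + 1)) = (k+1, sj N (k+1)) := by
  simp [stepc]

lemma stepc_mid {N k L : ℕ} {c} {m : ℕ} (h1 : L < m) (h2 : m ≠ L + (N - k + 1)) :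
    stepc N k L c m = (k, if Even k then m - L else N - k - (m - L)) := by
  simp [stepc, h1.not_ge, h2]

lemma colC_length (N k : ℕ) : (colC N k).length = N - k + 1 := by simp [colC]

lemma spec_step (N k : ℕ) (hk : k < N) (W : List (Fin 6)) (c : ℕ → ℕ × ℕ)
    (h : Spec N k W c) : Spec N (k+1) (W ++ colC N k) (stepc N k W.length c) := by
  obtain ⟨hlen, hpos, hval, hinj, hsurj, hend, hchain, hlast⟩ := h
  have hL' : (W ++ colC N k).length = W.length + (N - k + 1) := by
    rw [List.length_append, colC_length]
  refine ⟨?_, ?_, ?_, ?_, ?_, ?_, ?_, ?_⟩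
  · -- length
    rw [hL', hlen]
    have h1 : N + 1 - k = (N - k) + 1 := by omega
    have h2 : N + 1 - (k + 1) = N - k := by omega
    have h3 := triNum_succ (N - k)
    have h4 := triNum_le (show N + 1 - k ≤ N + 1 by omega)
    rw [h1] at h4 ⊢
    rw [h2]
    omega
  · -- positions
    intro m hm
    rw [hL'] at hm
    rw [posSeq_append]
    by_cases hml : m ≤ W.length
    · have h0 : m - W.length = 0 := by omega
      rw [h0, posSeq_zero, add_zero, stepc_old hml]
      exact hpos m hml
    · have hWm : posSeq W m = Pt k (sj N k) := by
        rw [posSeq_of_le W (by omega), hpos W.length le_rfl, hend]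
      rw [hWm, col_pos N k hk (m - W.length) (by omega) (by omega)]
      by_cases hfin : m = W.length + (N - k + 1)
      · rw [if_pos (by omega), hfin, stepc_last]
      · rw [if_neg (by omega), stepc_mid (by omega) hfin]
  · -- validity
    intro m hm
    rw [hL'] at hm
    by_cases hml : m ≤ W.length
    · rw [stepc_old hml]
      obtain ⟨hv1, hv2⟩ := hval m hml
      refine ⟨hv1, ?_⟩
      rcases hv2 with h' | h'
      · exact Or.inl (by omega)
      · exact Or.inl (by rw [h']; exact Nat.lt_succ_self k)
    · by_cases hfin : m = W.length + (N - k + 1)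
      · rw [hfin, stepc_last]
        refine ⟨?_, Or.inr rfl⟩
        simp only [sj]
        split <;> omega
      · rw [stepc_mid (by omega) hfin]
        constructor
        · simp only
          split <;> omega
        · exact Or.inl (by omega)
  · -- injectivity
    intro m1 hm1 m2 hm2 heq
    rw [hL'] at hm1 hm2
    by_cases b1 : m1 ≤ W.length <;> by_cases b2 : m2 ≤ W.length
    · rw [stepc_old b1, stepc_old b2] at heq
      exact hinj m1 b1 m2 b2 heq
    · exfalso
      rw [stepc_old b1] at heq
      obtain ⟨_, hv2⟩ := hval m1 b1
      by_cases hfin : m2 = W.length + (N - k + 1)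
      · rw [hfin, stepc_last] at heq
        rcases hv2 with h' | h'
        · have h1' := congrArg Prod.fst heq
          simp only at h1'
          omega
        · rw [h'] at heq
          simp only [Prod.mk.injEq] at heq
          omega
      · rw [stepc_mid (by omega) hfin] at heq
        rcases hv2 with h' | h'
        · have h1' := congrArg Prod.fst heq
          simp only at h1'
          omega
        · rw [h'] at heq
          simp only [Prod.mk.injEq] at heq
          have h2' := heq.2
          by_cases he : Even k <;> simp only [sj, if_pos, if_neg, he, if_true, if_false] at h2' <;> omega
    · exfalso
      rw [stepc_old b2] at heq
      obtain ⟨_, hv2⟩ := hval m2 b2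
      by_cases hfin : m1 = W.length + (N - k + 1)
      · rw [hfin, stepc_last] at heq
        rcases hv2 with h' | h'
        · have h1' := congrArg Prod.fst heq
          simp only at h1'
          omega
        · rw [h'] at heq
          simp only [Prod.mk.injEq] at heq
          omega
      · rw [stepc_mid (by omega) hfin] at heq
        rcases hv2 with h' | h'
        · have h1' := congrArg Prod.fst heq
          simp only at h1'
          omega
        · rw [h'] at heq
          simp only [Prod.mk.injEq] at heq
          have h2' := heq.2
          by_cases he : Even k <;> simp only [sj, if_pos, if_neg, he, if_true, if_false] at h2' <;> omega
    · by_cases f1 : m1 = W.length + (N - k + 1) <;> by_cases f2 : m2 = W.length + (N - k + 1)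
      · omega
      · exfalso
        rw [f1, stepc_last, stepc_mid (by omega) f2] at heq
        simp only [Prod.mk.injEq] at heq
        omega
      · exfalso
        rw [f2, stepc_last, stepc_mid (by omega) f1] at heq
        simp only [Prod.mk.injEq] at heq
        omega
      · rw [stepc_mid (by omega) f1, stepc_mid (by omega) f2] at heq
        simp only [Prod.mk.injEq] at heq
        have h2' := heq.2
        by_cases he : Even k <;> simp only [he, if_true, if_false] at h2' <;> omega
  · -- surjectivity
    intro i j hijN hcase
    rw [hL']
    rcases hcase with hik | hfin
    · by_cases hik' : i < k
      · obtain ⟨m, hm, hcm⟩ := hsurj i j hijN (Or.inl hik')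
        exact ⟨m, by omega, by rw [stepc_old hm]; exact hcm⟩
      · have hik2 : i = k := by omega
        by_cases hj : j = sj N k
        · obtain ⟨m, hm, hcm⟩ := hsurj i j hijN (Or.inr (by rw [hik2, hj]))
          exact ⟨m, by omega, by rw [stepc_old hm]; exact hcm⟩
        · by_cases he : Even k
          · have hsj : sj N k = 0 := by simp [sj, he]
            rw [hsj] at hj
            refine ⟨W.length + j, by omega, ?_⟩
            rw [stepc_mid (by omega) (by omega)]
            simp only [if_pos he, Prod.mk.injEq]
            omega
          · have hsj : sj N k = N - k := by simp [sj, he]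
            rw [hsj] at hj
            have hjlt : j < N - k := by omega
            refine ⟨W.length + (N - k - j), by omega, ?_⟩
            rw [stepc_mid (by omega) (by omega)]
            simp only [if_neg he, Prod.mk.injEq]
            omega
    · simp only [Prod.mk.injEq] at hfin
      exact ⟨W.length + (N - k + 1), by omega, by rw [hfin.1, hfin.2, stepc_last]⟩
  · -- endpoint
    rw [hL', stepc_last]
  · -- chain
    rw [← List.cons_append]
    rw [List.chain'_append]
    refine ⟨hchain, ?_, ?_⟩
    · unfold colC
      by_cases he : Even k
      · simp only [if_pos he]
        exact chain'_rep (by unfold ForbiddenTurn; decide) (by unfold ForbiddenTurn; decide) _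
      · simp only [if_neg he]
        exact chain'_rep (by unfold ForbiddenTurn; decide) (by unfold ForbiddenTurn; decide) _
    · intro x hx y hy
      rw [hlast] at hx
      simp at hx
      have hy' : y = (if Even k then 1 else 4) := by
        unfold colC at hy
        have hNk : 1 ≤ N - k := by omega
        rcases Nat.exists_eq_add_of_le hNk with ⟨p, hp⟩
        rw [hp] at hy
        rw [show 1 + p = p + 1 from by omega, List.replicate_succ, List.cons_append,
          List.head?_cons] at hy
        simp at hy
        exact hy.symm
      subst hx; subst hy'
      by_cases he : Even k <;> simp only [he, if_true, if_false] <;> unfold ForbiddenTurn <;> decide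
  · -- getLast?
    rw [← List.cons_append, List.getLast?_append]
    unfold colC
    rw [List.getLast?_append]
    have : Even (k+1) ↔ ¬ Even k := Nat.even_add_one
    by_cases he : Even k <;> simp [he, this]

lemma spec_zero (N : ℕ) : Spec N 0 [] (fun _ => (0,0)) := by
  refine ⟨by simp, ?_, ?_, ?_, ?_, by simp [sj], by simp [List.chain'_singleton], by simp [sj]⟩
  · intro m hm
    simp at hm; subst hm
    simp [posSeq_zero, Pt]
  · intro m hm; simp [sj]
  · intro m1 h1 m2 h2 _; simp at h1 h2; omega
  · intro i j _ hij
    rcases hij with h | h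
    · omega
    · exact ⟨0, le_refl 0, by simpa [sj] using h.symm⟩

lemma spec_exists (N : ℕ) : ∀ k, k ≤ N → ∃ W c, Spec N k W c := by
  intro k
  induction k with
  | zero => exact fun _ => ⟨[], _, spec_zero N⟩
  | succ k ih =>
    intro hk
    obtain ⟨W, c, h⟩ := ih (by omega)
    exact ⟨_, _, spec_step N k (by omega) W c h⟩

lemma Pt00 : Pt 0 0 = 0 := by simp [Pt]

lemma sjNN (N : ℕ) : sj N N = 0 := by unfold sj; split <;> omega

/-- For every `n ≥ 2` there exists at least one W-path of order `n`. -/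
theorem exists_wPath (n : ℕ) (hn : 2 ≤ n) : ∃ w : List (Fin 6), IsWPath n w := by
  obtain ⟨W, c, hlen, hpos, hval, hinj, hsurj, hend, hchain, hlast⟩ :=
    spec_exists (n-1) (n-1) le_rfl
  have hN : n - 1 + 1 = n := by omega
  rw [hN] at hlen
  rw [sjNN] at hend hsurj hval
  refine ⟨W, ⟨?_, ?_, ?_, ?_, ?_⟩, ?_⟩
  · rw [hlen, show n - (n-1) = 1 by omega, show triNum 1 = 1 from rfl]
  · intro m1 m2 heq
    have h1 : (m1:ℕ) ≤ W.length := Nat.lt_succ_iff.mp m1.isLt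
    have h2 : (m2:ℕ) ≤ W.length := Nat.lt_succ_iff.mp m2.isLt
    simp only at heq
    rw [hpos m1 h1, hpos m2 h2] at heq
    obtain ⟨a, b⟩ := Pt_inj heq
    exact Fin.ext (hinj m1 h1 m2 h2 (Prod.ext a b))
  · ext p
    simp only [Set.mem_range, inscribedGrid, Set.mem_setOf_eq]
    constructor
    · rintro ⟨m, rfl⟩
      have hm : (m:ℕ) ≤ W.length := Nat.lt_succ_iff.mp m.isLt
      obtain ⟨hv1, _⟩ := hval m hm
      exact ⟨(c m).1, (c m).2, hv1, hpos m hm⟩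
    · rintro ⟨i, j, hij, rfl⟩
      have hcase : i < n - 1 ∨ (i, j) = (n - 1, 0) := by
        rcases Nat.lt_or_ge i (n-1) with h | h
        · exact Or.inl h
        · right
          have hi : i = n - 1 := by omega
          have hj : j = 0 := by omega
          rw [hi, hj]
      obtain ⟨m, hm, hcm⟩ := hsurj i j hij hcase
      refine ⟨⟨m, by omega⟩, ?_⟩
      simp only
      rw [hpos m hm, hcm]
  · rw [posSeq_zero, Pt00]
  · rw [hpos W.length le_rfl, hend]
  · rw [← List.cons_append, List.chain'_append]
    refine ⟨hchain, List.chain'_singleton 0, ?_⟩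
    intro x hx y hy
    rw [hlast] at hx
    simp at hx hy
    subst hx; subst hy
    by_cases he : Even (n-1) <;> simp only [he, if_true, if_false] <;>
      unfold ForbiddenTurn <;> decide
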